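/- Let $K \subset \mathbb{R}^n$ be a bounded Kakeya set with direction set $S \subset S^{n-1}$, $\mathcal{H}^{n-1}(S) > 0$, with segments $L_e \subset K$ for $e \in S$, and let $g \colon K \to (X,d)$ be a map. Suppose $\{B_j^X\}_{j \in \mathbb{N}}$ are sets covering $g(K)$, and $\{B_j\}$ are balls in $\mathbb{R}^n$ with diameters $d_j$ such that $g^{-1}(B_j^X) \subset K \cap QB_j$ and $\mathcal{H}^1(L_e \cap 2QB_j) \geq c\, d_j$ whenever $L_e \cap QB_j \neq \emptyset$. Let $u > 0$ and suppose $\mathcal{H}^u_\infty(g(L_e)) \geq \tau$ for all $e \in S$, where $d_j^X = \operatorname{diam} B_j^X$. Then for every $e \in S$, the function $f = \sum_j \frac{(d_j^X)^u}{d_j}\chi_{2QB_j}$ satisfies $\int_{L_e} f \, d\mathcal{H}^1 \geq c\,\tau$. -/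

import Mathlib

open Set Metric MeasureTheory ENNReal

noncomputable section

/-- The unit line segment from `x` in direction `e`. -/
def seg {n : ℕ} (e x : EuclideanSpace ℝ (Fin n)) : Set (EuclideanSpace ℝ (Fin n)) :=
  (fun t : ℝ => x + t • e) '' Set.Icc (0:ℝ) 1

/-- `u`-dimensional Hausdorff content: infimum of `∑ (diam Eᵢ)^u` over countable covers. -/
def hContent {X : Type*} [EMetricSpace X] (u : ℝ) (A : Set X) : ℝ≥0∞ :=
  ⨅ (E : ℕ → Set X) (_ : A ⊆ ⋃ i, E i), ∑' i, EMetric.diam (E i) ^ u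

/-- The admissibility estimate: the Riesz-type function built from the covering data has
line integral at least `c τ` over every segment of the Kakeya set. -/
theorem stmt17 {n : ℕ} {X : Type*} [MetricSpace X]
    (K : Set (EuclideanSpace ℝ (Fin n)))
    (S : Set (EuclideanSpace ℝ (Fin n)))
    (hS : S ⊆ Metric.sphere (0 : EuclideanSpace ℝ (Fin n)) 1)
    (hSpos : 0 < μH[((n : ℝ) - 1)] S)
    (y : EuclideanSpace ℝ (Fin n) → EuclideanSpace ℝ (Fin n))
    (hseg : ∀ e ∈ S, seg e (y e) ⊆ K)
    (g : EuclideanSpace ℝ (Fin n) → X)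
    (BX : ℕ → Set X) (x : ℕ → EuclideanSpace ℝ (Fin n)) (rad : ℕ → ℝ)
    (hrad : ∀ j, 0 < rad j)
    (Q : ℝ) (hQ : 1 ≤ Q)
    (hcover : g '' K ⊆ ⋃ j, BX j)
    (hpre : ∀ j, K ∩ g ⁻¹' BX j ⊆ Metric.closedBall (x j) (Q * rad j))
    (c : ℝ) (hc : 0 < c)
    (hlen : ∀ j, ∀ e ∈ S,
      (seg e (y e) ∩ Metric.closedBall (x j) (Q * rad j)).Nonempty →
      ENNReal.ofReal (c * (2 * rad j)) ≤
        μH[1] (seg e (y e) ∩ Metric.closedBall (x j) (2 * Q * rad j)))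
    (u : ℝ) (hu : 0 < u) (τ : ℝ) (hτ : 0 < τ)
    (hcont : ∀ e ∈ S, ENNReal.ofReal τ ≤ hContent u (g '' seg e (y e))) :
    ∀ e ∈ S, ENNReal.ofReal (c * τ) ≤
      ∫⁻ z in seg e (y e),
        (∑' j, (EMetric.diam (BX j) ^ u / ENNReal.ofReal (2 * rad j)) *
          (Metric.closedBall (x j) (2 * Q * rad j)).indicator (fun _ => (1:ℝ≥0∞)) z)
        ∂(μH[1]) := by
  classical
  intro e he
  set L := seg e (y e) with hLdef
  set J : Set ℕ := {j | (L ∩ Metric.closedBall (x j) (Q * rad j)).Nonempty} with hJdef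
  -- the balls indexed by J cover g '' L
  have hcov : g '' L ⊆ ⋃ j, (if j ∈ J then BX j else (∅ : Set X)) := by
    rintro _ ⟨z, hz, rfl⟩
    have hzK : z ∈ K := hseg e he hz
    obtain ⟨j, hj⟩ := mem_iUnion.1 (hcover ⟨z, hzK, rfl⟩)
    have hJ : j ∈ J := ⟨z, hz, hpre j ⟨hzK, hj⟩⟩
    exact mem_iUnion.2 ⟨j, by simp [hJ, hj]⟩
  have hcont' : ENNReal.ofReal τ ≤
      ∑' j, (if j ∈ J then EMetric.diam (BX j) ^ u else 0) := by
    refine (hcont e he).trans ?_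
    refine le_trans (iInf₂_le (fun j => if j ∈ J then BX j else (∅ : Set X)) hcov) ?_
    refine le_of_eq (tsum_congr fun j => ?_)
    by_cases h : j ∈ J
    · simp [h, ENNReal.zero_rpow_of_pos hu]
    · simp [h, ENNReal.zero_rpow_of_pos hu]
      exact Or.inl ⟨Metric.ediam_empty, hu⟩
  -- each summand's integral
  have hterm : ∀ j, (if j ∈ J then ENNReal.ofReal c * EMetric.diam (BX j) ^ u else 0) ≤
      ∫⁻ z in L, (EMetric.diam (BX j) ^ u / ENNReal.ofReal (2 * rad j)) *
        (Metric.closedBall (x j) (2 * Q * rad j)).indicator (fun _ => (1:ℝ≥0∞)) z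
        ∂(μH[1]) := by
    intro j
    by_cases h : j ∈ J
    · simp only [h, if_true]
      have hint : ∫⁻ z in L, (EMetric.diam (BX j) ^ u / ENNReal.ofReal (2 * rad j)) *
          (Metric.closedBall (x j) (2 * Q * rad j)).indicator (fun _ => (1:ℝ≥0∞)) z
          ∂(μH[1]) =
          (EMetric.diam (BX j) ^ u / ENNReal.ofReal (2 * rad j)) *
            μH[1] (L ∩ Metric.closedBall (x j) (2 * Q * rad j)) := by
        rw [lintegral_const_mul _ (show Measurable fun z =>
            (Metric.closedBall (x j) (2 * Q * rad j)).indicator (fun _ => (1:ℝ≥0∞)) z from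
            measurable_const.indicator measurableSet_closedBall),
          lintegral_indicator measurableSet_closedBall]
        simp [Measure.restrict_restrict measurableSet_closedBall, Set.inter_comm]
      rw [hint]
      have hμ := hlen j e he h
      calc ENNReal.ofReal c * EMetric.diam (BX j) ^ u
          = (EMetric.diam (BX j) ^ u / ENNReal.ofReal (2 * rad j)) *
              ENNReal.ofReal (c * (2 * rad j)) := by
            rw [ENNReal.ofReal_mul hc.le,
              mul_comm (ENNReal.ofReal c) (ENNReal.ofReal (2 * rad j)), ← mul_assoc,
              ENNReal.div_mul_cancel (ENNReal.ofReal_pos.2 (by linarith [hrad j])).ne'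
                ENNReal.ofReal_ne_top, mul_comm]
        _ ≤ _ := by gcongr
    · simp [h]
  -- put everything together
  have hmeas : ∀ j, Measurable fun z =>
      (EMetric.diam (BX j) ^ u / ENNReal.ofReal (2 * rad j)) *
        (Metric.closedBall (x j) (2 * Q * rad j)).indicator (fun _ => (1:ℝ≥0∞)) z :=
    fun j => ((measurable_one).indicator measurableSet_closedBall).const_mul _
  calc ENNReal.ofReal (c * τ) = ENNReal.ofReal c * ENNReal.ofReal τ :=
        ENNReal.ofReal_mul hc.le
    _ ≤ ENNReal.ofReal c * ∑' j, (if j ∈ J then EMetric.diam (BX j) ^ u else 0) := by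
        gcongr
    _ = ∑' j, (if j ∈ J then ENNReal.ofReal c * EMetric.diam (BX j) ^ u else 0) := by
        rw [← ENNReal.tsum_mul_left]
        exact tsum_congr fun j => by by_cases h : j ∈ J <;> simp [h]
    _ ≤ ∑' j, ∫⁻ z in L, (EMetric.diam (BX j) ^ u / ENNReal.ofReal (2 * rad j)) *
          (Metric.closedBall (x j) (2 * Q * rad j)).indicator (fun _ => (1:ℝ≥0∞)) z
          ∂(μH[1]) := ENNReal.tsum_le_tsum hterm
    _ = _ := (lintegral_tsum fun j => (hmeas j).aemeasurable).symm
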